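/- Let d : ℕ with 0 < d and set ω = Complex.exp(2 * π * I / d). Define the matrices over ℂ indexed by ZMod d: the boost Z with Z i j = (if i = j then ω^(i.val) else 0), the shift X with X i j = (if i = j + 1 then 1 else 0), the qudit Hadamard H with H i j = ω^(i.val * j.val) / Real.sqrt d, and the SUM gate on ZMod d × ZMod d with SUM (m, s) (m', n) = (if m = m' ∧ s = m' + n then 1 else 0). Then the qudit Bell transformation maps the Pauli-basis labels to the vectorized Heisenberg–Weyl operators: for all a_z, a_x : ZMod d, (SUM * (H ⊗ₖ 1)) *ᵥ (Pi.single (a_z, -a_x) 1) = ((Real.sqrt d : ℂ))⁻¹ • vec (Z ^ (a_z.val) * X ^ (a_x.val)). -/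

import Mathlib

open Kronecker Matrix Complex

/-- Row-stacking vectorization of a square matrix. -/
def vec {m : Type*} (O : Matrix m m ℂ) : m × m → ℂ := fun z => O z.1 z.2

/-- The primitive `d`-th root of unity `ω = exp(2πi/d)`. -/
noncomputable def omega (d : ℕ) : ℂ := Complex.exp (2 * Real.pi * Complex.I / d)

/-- The qudit boost (clock) operator `Z`. -/
noncomputable def quditZ (d : ℕ) : Matrix (ZMod d) (ZMod d) ℂ :=
  Matrix.of fun i j => if i = j then (omega d) ^ i.val else 0

/-- The qudit shift operator `X`. -/
def quditX (d : ℕ) : Matrix (ZMod d) (ZMod d) ℂ :=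
  Matrix.of fun i j => if i = j + 1 then 1 else 0

/-- The qudit Hadamard (Fourier) gate `H`. -/
noncomputable def quditH (d : ℕ) : Matrix (ZMod d) (ZMod d) ℂ :=
  Matrix.of fun i j => (omega d) ^ (i.val * j.val) / (Real.sqrt d : ℂ)

/-- The qudit SUM gate. -/
def quditSUM (d : ℕ) : Matrix (ZMod d × ZMod d) (ZMod d × ZMod d) ℂ :=
  Matrix.of fun z w => if z.1 = w.1 ∧ z.2 = w.1 + w.2 then 1 else 0

/-- The qudit Bell transformation maps the Pauli-basis labels to the vectorized
Heisenberg–Weyl operators. -/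
lemma quditZ_pow (d : ℕ) [NeZero d] (n : ℕ) :
    quditZ d ^ n = Matrix.of (fun i j => if i = j then (omega d) ^ (i.val * n) else 0) := by
  induction n with
  | zero => ext i j; simp [Matrix.one_apply]
  | succ n ih =>
    rw [pow_succ, ih]
    ext i j
    simp only [Matrix.mul_apply, Matrix.of_apply, quditZ]
    rw [Finset.sum_eq_single i]
    · by_cases h : i = j <;> simp [h, pow_succ, pow_mul, mul_comm]
      ring
    · intro b _ hb; simp [Ne.symm hb]
    · simp

lemma quditX_pow (d : ℕ) [NeZero d] (n : ℕ) :
    quditX d ^ n = Matrix.of (fun i j => if i = j + (n : ZMod d) then 1 else 0) := by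
  induction n with
  | zero => ext i j; simp [Matrix.one_apply]
  | succ n ih =>
    rw [pow_succ, ih]
    ext i j
    simp only [Matrix.mul_apply, Matrix.of_apply, quditX]
    rw [Finset.sum_eq_single (j + 1)]
    · have he : j + ((n : ZMod d) + 1) = j + 1 + (n : ZMod d) := by ring
      push_cast
      rw [he]
      simp
    · intro b _ hb; simp [hb]
    · simp

theorem qudit_bell_transformation (d : ℕ) (hd : 0 < d) [NeZero d] (a_z a_x : ZMod d) :
    (quditSUM d * (quditH d ⊗ₖ (1 : Matrix (ZMod d) (ZMod d) ℂ))) *ᵥ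
        Pi.single ((a_z, -a_x) : ZMod d × ZMod d) (1 : ℂ) =
      ((Real.sqrt d : ℂ))⁻¹ • _root_.vec (quditZ d ^ a_z.val * quditX d ^ a_x.val) := by
  funext z
  obtain ⟨i, j⟩ := z
  rw [Matrix.mulVec_single_one, Matrix.col_apply]
  simp only [mul_one, Matrix.mul_apply, quditSUM, quditH, Matrix.of_apply,
    Matrix.kroneckerMap_apply, Matrix.one_apply, quditZ_pow, quditX_pow,
    Pi.smul_apply, _root_.vec, smul_eq_mul, Fintype.sum_prod_type]
  rw [Finset.sum_eq_single i]
  · rw [Finset.sum_eq_single (j - i)]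
    · simp only [add_sub_cancel, and_true, if_pos rfl, true_and]
      rw [ZMod.natCast_val, ZMod.cast_id]
      by_cases h : j - i = -a_x
      · have h2 : i = j + a_x := by linear_combination -h
        simp [h, h2, div_eq_mul_inv, mul_comm]
      · have h2 : ¬ i = j + a_x := fun h2 => h (by linear_combination -h2)
        simp [h, h2]
    · intro b _ hb
      rw [if_neg]
      · simp
      · intro hc
        exact hb (by linear_combination -hc.2)
    · simp
  · intro b _ hb
    rw [Finset.sum_eq_zero]
    intro c _
    rw [if_neg (by tauto)]
    simp
  · simp
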